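/- Let q be a power of an odd prime with q ≥ 5, let m ≥ 2 be an integer that does not divide q−1 and such that every prime factor of m divides q−1 and, if 4 divides m, then 4 divides q−1. Let l = ord_m(q), assume l divides m and set k = m/l. Let a ∈ F_q have multiplicative order e = ∏_{p prime, p ∣ m} p^{v_p(q−1)}, assume x^m − a is irreducible over F_q, and let θ be the image of x in F_{q^m} = F_q[x]/(x^m − a). Let S be the set of vectors e = (e_{ij})_{0 ≤ i ≤ l−1, 0 ≤ j ≤ k−1} ∈ {0,1}^{kl} satisfying ∑_{i=0}^{l−1} ∑_{j=0}^{k−1} (ik+1)·e_{ij} < m. Then for every non-zero b ∈ F_q, the multiplicative order of θ + b in F_{q^m}^* is at least the cardinality of S. -/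

import Mathlib

open Polynomial

namespace OrderTheorem7

variable {F : Type*} [Field F] {ι : Type*} [DecidableEq ι]

lemma coeff_prod_binom (A : Finset ι) (c : ι → ℕ) (u : ι → F) (b : F) (δ : ℕ) :
    (∏ i ∈ A, (C (u i) * X ^ c i + C b)).coeff δ
      = ∑ T ∈ A.powerset.filter (fun T => ∑ i ∈ T, c i = δ),
          (∏ i ∈ T, u i) * b ^ (A.card - T.card) := by
  rw [Finset.prod_add]
  have h1 : ∀ T ∈ A.powerset,
      (∏ i ∈ T, (C (u i) * X ^ c i)) * ∏ _i ∈ A \ T, C b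
        = C ((∏ i ∈ T, u i) * b ^ (A.card - T.card)) * X ^ (∑ i ∈ T, c i) := by
    intro T hT
    rw [Finset.mem_powerset] at hT
    rw [Finset.prod_mul_distrib, Finset.prod_pow_eq_pow_sum, Finset.prod_const,
      Finset.card_sdiff_of_subset hT, C_mul, C_pow, map_prod]
    ring
  rw [Finset.sum_congr rfl h1, finset_sum_coeff]
  have h2 : ∀ T ∈ A.powerset,
      (C ((∏ i ∈ T, u i) * b ^ (A.card - T.card)) * X ^ (∑ i ∈ T, c i)).coeff δ
        = if (∑ i ∈ T, c i) = δ then (∏ i ∈ T, u i) * b ^ (A.card - T.card) else 0 := by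
    intro T _
    rw [coeff_C_mul, coeff_X_pow]
    by_cases h : (∑ i ∈ T, c i) = δ
    · simp [h]
    · have h' : δ ≠ ∑ i ∈ T, c i := fun hh => h hh.symm
      simp [h, h']
  rw [Finset.sum_congr rfl h2, ← Finset.sum_filter]

/-- the factors are nonzero polynomials -/
lemma binom_ne_zero {c : ℕ} (hc : 0 < c) {u : F} (hu : u ≠ 0) (b : F) :
    (C u * X ^ c + C b : F[X]) ≠ 0 := by
  intro h
  have : (C u * X ^ c + C b : F[X]).coeff c = u := by
    rw [coeff_add, coeff_C_mul, coeff_X_pow, if_pos rfl, coeff_C, if_neg hc.ne', mul_one, add_zero]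
  rw [h] at this
  simp at this
  exact hu this.symm

/-- Key combinatorial lemma: products of binomials `u_i x^{c_i} + b`, where all
degrees are ≡ 1 mod k, and for each degree there are at most `k` (distinct) possible
leading coefficients, determine the factor set. -/
lemma binom_prod_inj (k : ℕ) (c : ι → ℕ) (u : ι → F) (b : F) (hb : b ≠ 0)
    (hu : ∀ i, u i ≠ 0) (hc1 : ∀ i, c i % k = 1 % k) (hcpos : ∀ i, 0 < c i)
    (hinj : ∀ i j, c i = c j → u i = u j → i = j)
    (hrow : ∀ (i : ι) (S : Finset ι), (∀ j ∈ S, c j = c i) → S.card ≤ k) :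
    ∀ n (A B : Finset ι), A.card + B.card = n →
      (∏ i ∈ A, (C (u i) * X ^ c i + C b)) = ∏ i ∈ B, (C (u i) * X ^ c i + C b) → A = B := by
  intro n
  induction n using Nat.strong_induction_on with
  | _ n IH =>
  intro A B hn hAB
  rcases (A ∪ B).eq_empty_or_nonempty with hE | hNE
  · rw [Finset.union_eq_empty] at hE
    rw [hE.1, hE.2]
  -- minimal degree
  obtain ⟨i₀, hi₀mem, hi₀min⟩ := (A ∪ B).exists_min_image c hNE
  set d₀ := c i₀ with hd₀
  have hd₀pos : 0 < d₀ := hcpos i₀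
  have hd₀mod : d₀ % k = 1 % k := hc1 i₀
  -- characterize subsets with c-sum r*d₀, for 1 ≤ r ≤ k
  have hchar : ∀ (S : Finset ι), (S ⊆ A ∨ S ⊆ B) → ∀ r, 1 ≤ r → r ≤ k →
      ((∑ i ∈ S, c i = r * d₀) ↔ (S.card = r ∧ ∀ i ∈ S, c i = d₀)) := by
    intro S hS r hr1 hrk
    have hSub : ∀ i ∈ S, i ∈ A ∪ B := by
      intro i hi
      rcases hS with h | h
      · exact Finset.mem_union_left _ (h hi)
      · exact Finset.mem_union_right _ (h hi)
    constructor
    · intro hsum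
      have hlb : S.card * d₀ ≤ ∑ i ∈ S, c i := by
        calc S.card * d₀ = ∑ _i ∈ S, d₀ := by rw [Finset.sum_const, smul_eq_mul]
        _ ≤ ∑ i ∈ S, c i := Finset.sum_le_sum (fun i hi => hi₀min i (hSub i hi))
      have hcardle : S.card ≤ r := by
        by_contra hlt
        push_neg at hlt
        have : r * d₀ < S.card * d₀ := (Nat.mul_lt_mul_right hd₀pos).mpr hlt
        omega
      have hSne : S.Nonempty := by
        rcases S.eq_empty_or_nonempty with h | h
        · exfalso
          rw [h] at hsum
          simp at hsum
          omega
        · exact h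
      have hScard1 : 1 ≤ S.card := Finset.card_pos.mpr hSne
      have hkpos : 0 < k := lt_of_lt_of_le hr1 hrk
      have hcard : S.card = r := by
        rcases eq_or_lt_of_le (show 1 ≤ k from hkpos) with hk1 | hk2
        · omega
        · have h1k : 1 % k = 1 := Nat.mod_eq_of_lt hk2
          have hmodS : (∑ i ∈ S, c i) % k = S.card % k := by
            rw [Finset.sum_nat_mod, Finset.sum_congr rfl (fun i _ => by rw [hc1 i, h1k]),
              Finset.sum_const, smul_eq_mul, mul_one]
          have hd1 : d₀ % k = 1 := by rw [hd₀mod, h1k]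
          have hmodR : (r * d₀) % k = r % k := by
            conv_lhs => rw [Nat.mul_mod, hd1, mul_one, Nat.mod_mod_of_dvd _ (dvd_refl k)]
          have hcongr : S.card % k = r % k := by
            rw [hsum, hmodR] at hmodS
            exact hmodS.symm
          obtain ⟨t, ht⟩ := (Nat.modEq_iff_dvd' hcardle).mp hcongr
          match t with
          | 0 => omega
          | t+1 =>
            have : k ≤ k * (t+1) := Nat.le_mul_of_pos_right k (Nat.succ_pos t)
            omega
      refine ⟨hcard, ?_⟩
      by_contra hne
      push_neg at hne
      obtain ⟨j, hjS, hjne⟩ := hne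
      have hjlt : d₀ < c j := lt_of_le_of_ne (hi₀min j (hSub j hjS)) (fun h => hjne h.symm)
      have hlt2 : S.card * d₀ < ∑ i ∈ S, c i := by
        calc S.card * d₀ = ∑ _i ∈ S, d₀ := by rw [Finset.sum_const, smul_eq_mul]
        _ < ∑ i ∈ S, c i :=
          Finset.sum_lt_sum (fun i hi => hi₀min i (hSub i hi)) ⟨j, hjS, hjlt⟩
      rw [hcard] at hlt2
      omega
    · rintro ⟨hcard, hall⟩
      rw [Finset.sum_congr rfl hall, Finset.sum_const, smul_eq_mul, hcard]
  classical
  set f : ι → F[X] := fun i => C (u i) * X ^ c i + C b with hf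
  set A₀ := A.filter (fun i => c i = d₀) with hA₀def
  set B₀ := B.filter (fun i => c i = d₀) with hB₀def
  have hA₀sub : A₀ ⊆ A := Finset.filter_subset _ _
  have hB₀sub : B₀ ⊆ B := Finset.filter_subset _ _
  -- constant coefficient: b ^ |A| = b ^ |B|
  have hconstfilter : ∀ (S : Finset ι),
      S.powerset.filter (fun T => ∑ i ∈ T, c i = 0) = {∅} := by
    intro S
    ext T
    simp only [Finset.mem_filter, Finset.mem_powerset, Finset.mem_singleton]
    constructor
    · rintro ⟨hTS, hT0⟩
      rcases T.eq_empty_or_nonempty with h | ⟨j, hj⟩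
      · exact h
      · exfalso
        have h1 : c j ≤ ∑ i ∈ T, c i := Finset.single_le_sum (fun i _ => Nat.zero_le _) hj
        have := hcpos j
        omega
    · rintro rfl
      exact ⟨Finset.empty_subset _, by simp⟩
  have hABu : (∏ i ∈ A, (C (u i) * X ^ c i + C b)) = ∏ i ∈ B, (C (u i) * X ^ c i + C b) := hAB
  have hconst : b ^ A.card = b ^ B.card := by
    have h0 := congrArg (fun P => P.coeff 0) hABu
    rw [coeff_prod_binom A c u b 0, coeff_prod_binom B c u b 0] at h0
    rw [hconstfilter A, hconstfilter B] at h0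
    simpa using h0
  -- elementary symmetric sums agree
  have hE : ∀ r, 1 ≤ r → r ≤ k →
      (∑ T ∈ A₀.powerset.filter (fun T => T.card = r), ∏ i ∈ T, u i)
        = ∑ T ∈ B₀.powerset.filter (fun T => T.card = r), ∏ i ∈ T, u i := by
    intro r hr1 hrk
    have hcoe := congrArg (fun P => P.coeff (r * d₀)) hABu
    rw [coeff_prod_binom A c u b (r * d₀), coeff_prod_binom B c u b (r * d₀)] at hcoe
    have hsetA : A.powerset.filter (fun T => ∑ i ∈ T, c i = r * d₀)
        = A₀.powerset.filter (fun T => T.card = r) := by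
      ext T
      simp only [Finset.mem_filter, Finset.mem_powerset]
      constructor
      · rintro ⟨hTA, hTsum⟩
        have h := (hchar T (Or.inl hTA) r hr1 hrk).mp hTsum
        exact ⟨fun i hi => Finset.mem_filter.mpr ⟨hTA hi, h.2 i hi⟩, h.1⟩
      · rintro ⟨hTA₀, hTcard⟩
        have hsub : T ⊆ A := fun i hi => (Finset.mem_filter.mp (hTA₀ hi)).1
        exact ⟨hsub, (hchar T (Or.inl hsub) r hr1 hrk).mpr
          ⟨hTcard, fun i hi => (Finset.mem_filter.mp (hTA₀ hi)).2⟩⟩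
    have hsetB : B.powerset.filter (fun T => ∑ i ∈ T, c i = r * d₀)
        = B₀.powerset.filter (fun T => T.card = r) := by
      ext T
      simp only [Finset.mem_filter, Finset.mem_powerset]
      constructor
      · rintro ⟨hTB, hTsum⟩
        have h := (hchar T (Or.inr hTB) r hr1 hrk).mp hTsum
        exact ⟨fun i hi => Finset.mem_filter.mpr ⟨hTB hi, h.2 i hi⟩, h.1⟩
      · rintro ⟨hTB₀, hTcard⟩
        have hsub : T ⊆ B := fun i hi => (Finset.mem_filter.mp (hTB₀ hi)).1
        exact ⟨hsub, (hchar T (Or.inr hsub) r hr1 hrk).mpr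
          ⟨hTcard, fun i hi => (Finset.mem_filter.mp (hTB₀ hi)).2⟩⟩
    rw [hsetA, hsetB] at hcoe
    have hcoe2 := congrArg (fun z => z * b ^ r) hcoe
    simp only [Finset.sum_mul] at hcoe2
    have hTA : ∀ T ∈ A₀.powerset.filter (fun T => T.card = r),
        (∏ i ∈ T, u i) * b ^ (A.card - T.card) * b ^ r = (∏ i ∈ T, u i) * b ^ A.card := by
      intro T hT
      obtain ⟨hTsub, hTcard⟩ := Finset.mem_filter.mp hT
      rw [Finset.mem_powerset] at hTsub
      have hrle : r ≤ A.card := by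
        rw [← hTcard]
        exact Finset.card_le_card (hTsub.trans hA₀sub)
      rw [hTcard, mul_assoc, ← pow_add]
      congr 2
      omega
    have hTB : ∀ T ∈ B₀.powerset.filter (fun T => T.card = r),
        (∏ i ∈ T, u i) * b ^ (B.card - T.card) * b ^ r = (∏ i ∈ T, u i) * b ^ B.card := by
      intro T hT
      obtain ⟨hTsub, hTcard⟩ := Finset.mem_filter.mp hT
      rw [Finset.mem_powerset] at hTsub
      have hrle : r ≤ B.card := by
        rw [← hTcard]
        exact Finset.card_le_card (hTsub.trans hB₀sub)
      rw [hTcard, mul_assoc, ← pow_add]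
      congr 2
      omega
    rw [Finset.sum_congr rfl hTA, Finset.sum_congr rfl hTB, ← Finset.sum_mul,
      ← Finset.sum_mul, ← hconst] at hcoe2
    exact mul_right_cancel₀ (pow_ne_zero _ hb) hcoe2
  -- the mini-polynomials with the same row data agree
  have hA₀card : A₀.card ≤ k :=
    hrow i₀ A₀ (fun j hj => (Finset.mem_filter.mp hj).2)
  have hB₀card : B₀.card ≤ k :=
    hrow i₀ B₀ (fun j hj => (Finset.mem_filter.mp hj).2)
  have hQ : (∏ i ∈ A₀, (C (u i) * X ^ (1:ℕ) + C (1:F)))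
      = ∏ i ∈ B₀, (C (u i) * X ^ (1:ℕ) + C (1:F)) := by
    ext r
    rw [coeff_prod_binom, coeff_prod_binom]
    have hfilt : ∀ (S : Finset ι), S.powerset.filter (fun T => ∑ _i ∈ T, (1:ℕ) = r)
        = S.powerset.filter (fun T => T.card = r) := by
      intro S
      apply Finset.filter_congr
      intro T _
      simp
    rw [hfilt, hfilt]
    simp only [one_pow, mul_one]
    rcases Nat.eq_zero_or_pos r with hr0 | hrpos
    · subst hr0
      have : ∀ (S : Finset ι), S.powerset.filter (fun T => T.card = 0) = {∅} := by
        intro S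
        ext T
        simp only [Finset.mem_filter, Finset.mem_powerset, Finset.mem_singleton,
          Finset.card_eq_zero]
        exact ⟨fun h => h.2, fun h => ⟨by simp [h], h⟩⟩
      rw [this, this]
    rcases le_or_gt r k with hrk | hkr
    · exact hE r hrpos hrk
    · have hempty : ∀ (S : Finset ι), S.card ≤ k →
          S.powerset.filter (fun T => T.card = r) = ∅ := by
        intro S hS
        rw [Finset.filter_eq_empty_iff]
        intro T hT
        rw [Finset.mem_powerset] at hT
        have := Finset.card_le_card hT
        omega
      rw [hempty _ hA₀card, hempty _ hB₀card]
  -- conclude A₀ = B₀ by evaluating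
  have hsubkey : ∀ (X₀ Y₀ : Finset ι), (∀ i ∈ X₀, c i = d₀) → (∀ i ∈ Y₀, c i = d₀) →
      (∏ i ∈ X₀, (C (u i) * X ^ (1:ℕ) + C (1:F)))
        = (∏ i ∈ Y₀, (C (u i) * X ^ (1:ℕ) + C (1:F))) → X₀ ⊆ Y₀ := by
    intro X₀ Y₀ hX hY hprod j hj
    have heval := congrArg (Polynomial.eval (-(u j)⁻¹)) hprod
    rw [Polynomial.eval_prod, Polynomial.eval_prod] at heval
    have hLzero : (∏ i ∈ X₀, Polynomial.eval (-(u j)⁻¹) (C (u i) * X ^ (1:ℕ) + C (1:F))) = 0 := by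
      apply Finset.prod_eq_zero hj
      simp only [Polynomial.eval_add, Polynomial.eval_mul, Polynomial.eval_pow,
        Polynomial.eval_C, Polynomial.eval_X, pow_one]
      rw [mul_neg, mul_inv_cancel₀ (hu j)]
      ring
    rw [hLzero] at heval
    obtain ⟨j', hj', hz⟩ := Finset.prod_eq_zero_iff.mp heval.symm
    simp only [Polynomial.eval_add, Polynomial.eval_mul, Polynomial.eval_pow,
      Polynomial.eval_C, Polynomial.eval_X, pow_one] at hz
    have huj : u j' = u j := by
      have h1 : u j' * (u j)⁻¹ = 1 := by
        have h2 : -(u j' * (u j)⁻¹) + 1 = 0 := by rw [← mul_neg]; exact hz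
        linear_combination -h2
      exact (mul_inv_eq_one₀ (hu j)).mp h1
    have hcc : c j' = c j := by rw [hY j' hj', hX j hj]
    have := hinj j' j hcc huj
    rwa [← this]
  have hA₀B₀ : A₀ = B₀ := by
    apply Finset.Subset.antisymm
    · exact hsubkey A₀ B₀ (fun i hi => (Finset.mem_filter.mp hi).2)
        (fun i hi => (Finset.mem_filter.mp hi).2) hQ
    · exact hsubkey B₀ A₀ (fun i hi => (Finset.mem_filter.mp hi).2)
        (fun i hi => (Finset.mem_filter.mp hi).2) hQ.symm
  have hA₀ne : A₀.Nonempty := by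
    rcases Finset.mem_union.mp hi₀mem with h | h
    · exact ⟨i₀, Finset.mem_filter.mpr ⟨h, rfl⟩⟩
    · rw [hA₀B₀]
      exact ⟨i₀, Finset.mem_filter.mpr ⟨h, rfl⟩⟩
  -- cancellation and recursion
  have hprodA₀ne : (∏ i ∈ A₀, f i) ≠ 0 := by
    apply Finset.prod_ne_zero_iff.mpr
    intro i _
    exact binom_ne_zero (hcpos i) (hu i) b
  have hsplitA : ∏ i ∈ A, f i = (∏ i ∈ A₀, f i) * ∏ i ∈ A.filter (fun i => ¬ c i = d₀), f i :=
    (Finset.prod_filter_mul_prod_filter_not A _ f).symm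
  have hsplitB : ∏ i ∈ B, f i = (∏ i ∈ B₀, f i) * ∏ i ∈ B.filter (fun i => ¬ c i = d₀), f i :=
    (Finset.prod_filter_mul_prod_filter_not B _ f).symm
  rw [hsplitA, hsplitB, ← hA₀B₀] at hAB
  have hrest := mul_left_cancel₀ hprodA₀ne hAB
  have hcardA := Finset.card_filter_add_card_filter_not (s := A) (p := fun i => c i = d₀)
  have hcardB := Finset.card_filter_add_card_filter_not (s := B) (p := fun i => c i = d₀)
  have hA₀cardpos : 0 < A₀.card := Finset.card_pos.mpr hA₀ne
  have hB₀cardpos : 0 < B₀.card := by rw [← hA₀B₀]; exact hA₀cardpos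
  have hltn : (A.filter (fun i => ¬ c i = d₀)).card + (B.filter (fun i => ¬ c i = d₀)).card < n := by
    have hBB : B₀.card = (B.filter (fun i => c i = d₀)).card := rfl
    omega
  have := IH _ hltn (A.filter (fun i => ¬ c i = d₀)) (B.filter (fun i => ¬ c i = d₀)) rfl hrest
  have hAeq : A = A₀ ∪ A.filter (fun i => ¬ c i = d₀) :=
    (Finset.filter_union_filter_not_eq (p := fun i => c i = d₀) (s := A)).symm
  have hBeq : B = B₀ ∪ B.filter (fun i => ¬ c i = d₀) :=
    (Finset.filter_union_filter_not_eq (p := fun i => c i = d₀) (s := B)).symm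
  rw [hAeq, hBeq, hA₀B₀, this]


/-- geometric sum identity in ℕ -/
lemma nat_geom (q l : ℕ) (hq : 1 ≤ q) :
    q ^ l - 1 = (q - 1) * ∑ i ∈ Finset.range l, q ^ i := by
  have hZ : ((q : ℤ) - 1) * ∑ i ∈ Finset.range l, (q : ℤ) ^ i = (q : ℤ) ^ l - 1 := by
    rw [mul_comm]
    exact geom_sum_mul (q : ℤ) l
  have h1 : (1 : ℕ) ≤ q ^ l := Nat.one_le_pow _ _ hq
  apply Nat.cast_injective (R := ℤ)
  push_cast [h1, hq]
  linarith [hZ]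

lemma v2_q_add_one (q : ℕ) (h4 : 4 ∣ q - 1) (hq5 : 5 ≤ q) : padicValNat 2 (q + 1) = 1 := by
  haveI : Fact (Nat.Prime 2) := ⟨Nat.prime_two⟩
  obtain ⟨t, ht⟩ := h4
  have h2 : q + 1 = 2 * (2 * t + 1) := by omega
  rw [h2, padicValNat.mul two_ne_zero (by omega), padicValNat.self (by norm_num),
    padicValNat.eq_zero_of_not_dvd (by omega)]

/-- Main number-theoretic lemma: `m ∣ l·(q-1)` -/
lemma m_dvd_l_mul (q m l : ℕ) (hq5 : 5 ≤ q) (hqodd : Odd q)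
    (hm0 : m ≠ 0)
    (hprime : ∀ p : ℕ, p.Prime → p ∣ m → p ∣ (q - 1))
    (h4 : 4 ∣ m → 4 ∣ (q - 1))
    (hl0 : 0 < l)
    (hml : m ∣ q ^ l - 1) :
    m ∣ l * (q - 1) := by
  have hq1pos : 0 < q - 1 := by omega
  have hql : q ^ l - 1 ≠ 0 := by
    have : 5 ^ 1 ≤ q ^ l := by
      calc 5 ^ 1 ≤ q ^ 1 := by simpa using hq5
      _ ≤ q ^ l := Nat.pow_le_pow_right (by omega) hl0
    simp at this
    omega
  have hlq0 : l * (q - 1) ≠ 0 := by positivity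
  rw [← Nat.factorization_le_iff_dvd hm0 hlq0, Finsupp.le_iff]
  intro p hpsupp
  have hp : p.Prime := Nat.prime_of_mem_primeFactors (by rwa [Nat.support_factorization] at hpsupp)
  haveI : Fact p.Prime := ⟨hp⟩
  have hpm : p ∣ m := Nat.dvd_of_mem_primeFactors (by rwa [Nat.support_factorization] at hpsupp)
  have hpq1 : p ∣ q - 1 := hprime p hp hpm
  have hpnq : ¬ p ∣ q := by
    intro hpq
    have h1 : p ∣ q - (q - 1) := Nat.dvd_sub hpq hpq1
    have h2 : q - (q - 1) = 1 := by omega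
    rw [h2] at h1
    have := Nat.le_of_dvd one_pos h1
    have := hp.two_le
    omega
  have hkey : m.factorization p ≤ (q ^ l - 1).factorization p :=
    Finsupp.le_def.mp ((Nat.factorization_le_iff_dvd hm0 hql).mpr hml) p
  rw [Nat.factorization_mul (by omega : l ≠ 0) (by omega : q - 1 ≠ 0)]
  simp only [Finsupp.coe_add, Pi.add_apply]
  rw [Nat.factorization_def _ hp] at hkey ⊢
  rw [Nat.factorization_def _ hp, Nat.factorization_def _ hp]
  rw [Nat.factorization_def _ hp] at hkey
  by_cases hp2 : p = 2
  · subst hp2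
    by_cases hα : padicValNat 2 m ≤ 1
    · have h2q1 : 1 ≤ padicValNat 2 (q - 1) :=
        one_le_padicValNat_of_dvd (by omega) hpq1
      omega
    · push_neg at hα
      have h4m : (4 : ℕ) ∣ m := by
        have h22 : (2:ℕ) ^ 2 ∣ m := (Nat.Prime.pow_dvd_iff_le_factorization hp hm0).mpr
          (by rw [Nat.factorization_def _ hp]; omega)
        norm_num at h22
        exact h22
      have h4q : 4 ∣ q - 1 := h4 h4m
      rcases Nat.even_or_odd l with hle | hlo
      · have heq := padicValNat.pow_two_sub_pow (x := q) (y := 1) (by omega)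
          (by omega) (by omega) (by omega) hle
        rw [one_pow, v2_q_add_one q h4q hq5] at heq
        omega
      · have hgeom := nat_geom q l (by omega)
        have hSmod : (∑ i ∈ Finset.range l, q ^ i) % 2 = 1 := by
          rw [Finset.sum_nat_mod]
          have hterm : ∀ i ∈ Finset.range l, q ^ i % 2 = 1 :=
            fun i _ => Nat.odd_iff.mp (hqodd.pow)
          rw [Finset.sum_congr rfl hterm, Finset.sum_const, smul_eq_mul, mul_one,
            Finset.card_range]
          exact Nat.odd_iff.mp hlo
        have hS0 : (∑ i ∈ Finset.range l, q ^ i) ≠ 0 := by omega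
        have hSnd : ¬ (2:ℕ) ∣ (∑ i ∈ Finset.range l, q ^ i) := by omega
        rw [hgeom, padicValNat.mul (by omega : q - 1 ≠ 0) hS0,
          padicValNat.eq_zero_of_not_dvd hSnd] at hkey
        omega
  · have hpodd : Odd p := hp.odd_of_ne_two hp2
    have heq := padicValNat.pow_sub_pow hpodd (x := q) (y := 1) (n := l) (by omega)
      hpq1 hpnq (by omega)
    rw [one_pow] at heq
    omega

end OrderTheorem7

/-- Theorem 7: the multiplicative order of `θ + b` is at least the number of 0-1
vectors `(e_{ij})` of length `kl` with `∑_{i,j} (ik+1)·e_{ij} < m`. -/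
theorem order_at_least_card_S
    (F : Type*) [Field F] [Fintype F] (q m : ℕ)
    (hq : Fintype.card F = q)
    (hodd : ∃ p n : ℕ, p.Prime ∧ Odd p ∧ q = p ^ n)
    (hq5 : 5 ≤ q)
    (hm2 : 2 ≤ m)
    (hmndvd : ¬ m ∣ (q - 1))
    (hprime : ∀ p : ℕ, p.Prime → p ∣ m → p ∣ (q - 1))
    (h4 : 4 ∣ m → 4 ∣ (q - 1))
    (l k : ℕ)
    (hl : l = orderOf ((q : ZMod m)))
    (hldvd : l ∣ m)
    (hk : k = m / l)
    (a : F)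
    (ha : orderOf a = ∏ p ∈ m.primeFactors, p ^ (q - 1).factorization p)
    (hirr : Irreducible (X ^ m - C a : Polynomial F))
    (b : F) (hb : b ≠ 0) :
    (Finset.univ.filter (fun e : Fin l × Fin k → Fin 2 =>
        ∑ p : Fin l × Fin k, ((p.1 : ℕ) * k + 1) * (e p : ℕ) < m)).card ≤
      orderOf (AdjoinRoot.root (X ^ m - C a : Polynomial F)
        + AdjoinRoot.of (X ^ m - C a : Polynomial F) b) := by
  classical
  obtain ⟨p', n', hp', hoddp', hqpn⟩ := hodd
  have hqodd : Odd q := by rw [hqpn]; exact hoddp'.pow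
  have hm0 : m ≠ 0 := by omega
  haveI : NeZero m := ⟨hm0⟩
  have hq1 : 1 < q := by omega
  -- coprimality of q and m
  have hcop : Nat.Coprime q m := by
    by_contra hnc
    obtain ⟨p, hp, hpq, hpm⟩ := Nat.Prime.not_coprime_iff_dvd.mp hnc
    have h1 := hprime p hp hpm
    have h2 := Nat.dvd_sub hpq h1
    have h3 : q - (q - 1) = 1 := by omega
    rw [h3] at h2
    have := Nat.le_of_dvd one_pos h2
    have := hp.two_le
    omega
  set uQ := ZMod.unitOfCoprime q hcop with huQdef
  have hlu : l = orderOf uQ := by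
    rw [hl, ← orderOf_units, ZMod.coe_unitOfCoprime]
  have hlpos : 0 < l := by rw [hlu]; exact orderOf_pos uQ
  have hkpos : 0 < k := by
    rw [hk]; exact Nat.div_pos (Nat.le_of_dvd (by omega) hldvd) hlpos
  have hmlk : m = l * k := by rw [hk]; exact (Nat.mul_div_cancel' hldvd).symm
  have hql1 : (1:ℕ) ≤ q ^ l := Nat.one_le_pow _ _ (by omega)
  have hmdvd : m ∣ q ^ l - 1 := by
    have h1 : ((q : ZMod m))^l = 1 := by rw [hl]; exact pow_orderOf_eq_one _
    have h2 : ((q ^ l - 1 : ℕ) : ZMod m) = 0 := by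
      rw [Nat.cast_sub hql1]
      push_cast
      rw [h1, sub_self]
    exact (ZMod.natCast_eq_zero_iff _ _).mp h2
  have hkdvdq1 : k ∣ q - 1 := by
    have h1 : m ∣ l * (q - 1) := OrderTheorem7.m_dvd_l_mul q m l hq5 hqodd hm0 hprime h4 hlpos hmdvd
    rw [hmlk] at h1
    rcases h1 with ⟨t, ht⟩
    refine ⟨t, ?_⟩
    have h2 : l * (q - 1) = l * (k * t) := by rw [ht]; ring
    exact Nat.eq_of_mul_eq_mul_left hlpos h2
  -- ===== field setup =====
  set f : Polynomial F := X ^ m - C a with hfdef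
  haveI hfact : Fact (Irreducible f) := ⟨hirr⟩
  have hmono : f.Monic := monic_X_pow_sub_C a hm0
  have hfdeg : f.natDegree = m := natDegree_X_pow_sub_C
  have hfdeg' : f.degree = m := by
    rw [degree_eq_natDegree hmono.ne_zero, hfdeg]
  have hfne : f ≠ 0 := hmono.ne_zero
  let pb := AdjoinRoot.powerBasis' hmono
  haveI : Fintype (AdjoinRoot f) := Module.fintypeOfFintype pb.basis
  have hcardK : Fintype.card (AdjoinRoot f) = q ^ m := by
    rw [Module.card_fintype pb.basis, hq]
    congr 1
    simp [pb, AdjoinRoot.powerBasis', hfdeg]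
  -- characteristic
  haveI : CharP F (ringChar F) := ringChar.charP F
  obtain ⟨n₀, hp₀prime, hcardF⟩ := FiniteField.card F (ringChar F)
  haveI hp₀fact : Fact (Nat.Prime (ringChar F)) := ⟨hp₀prime⟩
  have hqp₀ : q = (ringChar F) ^ (n₀ : ℕ) := by rw [← hq, hcardF]
  haveI : CharP (AdjoinRoot f) (ringChar F) :=
    charP_of_injective_ringHom (algebraMap F (AdjoinRoot f)).injective (ringChar F)
  haveI : ExpChar (AdjoinRoot f) (ringChar F) := ExpChar.prime hp₀prime
  have hfrobK : ∀ (x y : AdjoinRoot f) (s : ℕ), (x + y) ^ q ^ s = x ^ q ^ s + y ^ q ^ s := by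
    intro x y s
    have hqs : q ^ s = (ringChar F) ^ ((n₀ : ℕ) * s) := by rw [hqp₀, ← pow_mul]
    rw [hqs]
    exact add_pow_char_pow (R := AdjoinRoot f) (p := ringChar F) (n := (n₀:ℕ)*s) (x := x) (y := y)
  have hFfix : ∀ (c : F) (s : ℕ), c ^ q ^ s = c := by
    intro c s
    rw [← hq]
    exact FiniteField.pow_card_pow _ _
  -- the root
  set θ := AdjoinRoot.root f with hθdef
  have hθm : θ ^ m = AdjoinRoot.of f a := by
    have h1 : AdjoinRoot.mk f (X ^ m - C a) = 0 := by
      rw [← hfdef]; exact AdjoinRoot.mk_self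
    rw [map_sub, map_pow, AdjoinRoot.mk_X, AdjoinRoot.mk_C] at h1
    exact sub_eq_zero.mp h1
  set x₀ := θ + AdjoinRoot.of f b with hx₀def
  have hx₀ne : x₀ ≠ 0 := by
    intro h0
    have h1 : AdjoinRoot.mk f (X + C b) = 0 := by
      rw [map_add, AdjoinRoot.mk_X, AdjoinRoot.mk_C]
      exact h0
    rw [AdjoinRoot.mk_eq_zero] at h1
    have h3 : (X + C b : Polynomial F) ≠ 0 := X_add_C_ne_zero b
    have h4 := Polynomial.natDegree_le_of_dvd h1 h3
    rw [hfdeg, natDegree_X_add_C] at h4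
    omega
  haveI : Nontrivial (AdjoinRoot f) := inferInstance
  have hfin : IsOfFinOrder x₀ := by
    refine isOfFinOrder_iff_pow_eq_one.mpr ⟨Fintype.card (AdjoinRoot f) - 1, ?_, ?_⟩
    · have := Fintype.one_lt_card (α := AdjoinRoot f)
      omega
    · exact FiniteField.pow_card_sub_one_eq_one x₀ hx₀ne
  have hordpos : 0 < orderOf x₀ := hfin.orderOf_pos
  have hZfix : ∀ z : AdjoinRoot f, z ^ q ^ m = z := by
    intro z
    rw [← hcardK]
    exact FiniteField.pow_card z
  -- distinctness of Frobenius iterates on x₀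
  have hdist : ∀ d, 0 < d → d < m → x₀ ^ q ^ d ≠ x₀ := by
    intro d hd0 hdm heq
    have hθfix : θ ^ q ^ d = θ := by
      have h1 : (θ + AdjoinRoot.of f b) ^ q ^ d = θ ^ q ^ d + AdjoinRoot.of f b := by
        rw [hfrobK]
        congr 1
        rw [← map_pow, hFfix]
      rw [hx₀def, h1] at heq
      exact add_right_cancel heq
    have hall : ∀ z : AdjoinRoot f, z ^ q ^ d = z := by
      intro z
      induction z using AdjoinRoot.induction_on with
      | _ g =>
      have hψ : ∀ w : AdjoinRoot f, (iterateFrobenius (AdjoinRoot f) (ringChar F) ((n₀:ℕ) * d)) w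
          = w ^ q ^ d := by
        intro w
        rw [iterateFrobenius_def, hqp₀, ← pow_mul]
      have hofc : ∀ c : F, (AdjoinRoot.of f c) ^ q ^ d = AdjoinRoot.of f c := by
        intro c
        rw [← map_pow, hFfix]
      calc (AdjoinRoot.mk f g) ^ q ^ d
          = (iterateFrobenius (AdjoinRoot f) (ringChar F) ((n₀:ℕ) * d))
              (eval₂ (algebraMap F (AdjoinRoot f)) θ g) := by
            rw [hψ, ← Polynomial.aeval_def, AdjoinRoot.aeval_eq]
        _ = eval₂ ((iterateFrobenius (AdjoinRoot f) (ringChar F) ((n₀:ℕ) * d)).comp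
              (algebraMap F (AdjoinRoot f)))
              ((iterateFrobenius (AdjoinRoot f) (ringChar F) ((n₀:ℕ) * d)) θ) g :=
            Polynomial.hom_eval₂ _ _ _ _
        _ = eval₂ (algebraMap F (AdjoinRoot f)) θ g := by
            congr 1
            · ext c
              simp only [RingHom.comp_apply]
              rw [hψ, AdjoinRoot.algebraMap_eq, hofc]
            · rw [hψ, hθfix]
        _ = AdjoinRoot.mk f g := by rw [← Polynomial.aeval_def, AdjoinRoot.aeval_eq]
    -- counting roots of X^{q^d} − X
    have hqd2 : 2 ≤ q ^ d := by
      calc 2 ≤ q := by omega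
      _ = q ^ 1 := (pow_one q).symm
      _ ≤ q ^ d := Nat.pow_le_pow_right (by omega) hd0
    set g : Polynomial (AdjoinRoot f) := X ^ q ^ d - X with hgdef
    have hdlt : (X : Polynomial (AdjoinRoot f)).degree < (X ^ q ^ d : Polynomial (AdjoinRoot f)).degree := by
      rw [Polynomial.degree_X, Polynomial.degree_X_pow]
      exact_mod_cast Nat.one_lt_cast.mpr (by omega : 1 < q ^ d)
    have hdegg : g.degree = (q ^ d : ℕ) := by
      rw [hgdef, Polynomial.degree_sub_eq_left_of_degree_lt hdlt]
      exact Polynomial.degree_X_pow _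
    have hgne : g ≠ 0 := by
      intro h0
      rw [h0, Polynomial.degree_zero] at hdegg
      exact WithBot.bot_ne_coe hdegg
    have hcount : Fintype.card (AdjoinRoot f) ≤ q ^ d := by
      have hsub : (Finset.univ : Finset (AdjoinRoot f)) ⊆ g.roots.toFinset := by
        intro z _
        rw [Multiset.mem_toFinset, Polynomial.mem_roots hgne]
        simp only [Polynomial.IsRoot, hgdef, Polynomial.eval_sub, Polynomial.eval_pow,
          Polynomial.eval_X]
        rw [hall z, sub_self]
      calc Fintype.card (AdjoinRoot f) = (Finset.univ : Finset (AdjoinRoot f)).card :=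
            Finset.card_univ.symm
        _ ≤ g.roots.toFinset.card := Finset.card_le_card hsub
        _ ≤ Multiset.card g.roots := g.roots.toFinset_card_le
        _ ≤ g.natDegree := Polynomial.card_roots' g
        _ = q ^ d := by
            rw [Polynomial.natDegree, hdegg]
            rfl
    rw [hcardK] at hcount
    have := (Nat.pow_le_pow_iff_right hq1).mp hcount
    omega
  -- conjugates of x₀
  have hθpow : ∀ s : ℕ, θ ^ q ^ s = (AdjoinRoot.of f) (a ^ (q ^ s / m)) * θ ^ (q ^ s % m) := by
    intro s
    conv_lhs => rw [← Nat.div_add_mod (q ^ s) m]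
    rw [pow_add, pow_mul, hθm, ← map_pow]
  have hconj : ∀ s : ℕ, x₀ ^ q ^ s
      = (AdjoinRoot.of f) (a ^ (q ^ s / m)) * θ ^ (q ^ s % m) + (AdjoinRoot.of f) b := by
    intro s
    rw [hx₀def, hfrobK, hθpow]
    congr 1
    rw [← map_pow, hFfix]
  -- residue analysis
  have hressub : ∀ s : ℕ, 1 ≤ q ^ s % m ∧ q ^ s % m < m ∧ k ∣ (q ^ s % m - 1) := by
    intro s
    have hlt : q ^ s % m < m := Nat.mod_lt _ (by omega)
    have hne0 : q ^ s % m ≠ 0 := by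
      intro h0
      have hd : m ∣ q ^ s := Nat.dvd_of_mod_eq_zero h0
      have hcop2 : Nat.Coprime (q ^ s) m := Nat.Coprime.pow_left s hcop
      have hg : m ∣ Nat.gcd (q ^ s) m := Nat.dvd_gcd hd dvd_rfl
      rw [Nat.Coprime] at hcop2
      rw [hcop2] at hg
      have := Nat.le_of_dvd one_pos hg
      omega
    have hk1 : k ∣ q ^ s - 1 :=
      hkdvdq1.trans (by simpa using Nat.sub_dvd_pow_sub_pow q 1 s)
    have hqs1 : 1 ≤ q ^ s := Nat.one_le_pow _ _ (by omega)
    have hmodk : (q ^ s % m) % k = 1 % k := by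
      rw [Nat.mod_mod_of_dvd _ ⟨l, by rw [hmlk]; ring⟩]
      have : 1 ≡ q ^ s [MOD k] := (Nat.modEq_iff_dvd' hqs1).mpr hk1
      exact this.symm
    have hdvd1 : k ∣ (q ^ s % m - 1) := by
      have h1 : 1 ≡ q ^ s % m [MOD k] := by
        unfold Nat.ModEq
        omega
      exact (Nat.modEq_iff_dvd' (by omega)).mp h1
    exact ⟨by omega, hlt, hdvd1⟩
  -- the row index of a power
  set I : ℕ → ℕ := fun s => (q ^ s % m - 1) / k with hIdef
  have hIval : ∀ s : ℕ, q ^ s % m = I s * k + 1 ∧ I s < l := by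
    intro s
    obtain ⟨h1, h2, h3⟩ := hressub s
    obtain ⟨t, ht⟩ := h3
    have hIt : I s = t := by
      rw [hIdef]
      simp only []
      rw [ht, mul_comm k t]
      exact Nat.mul_div_cancel t hkpos
    constructor
    · rw [hIt, mul_comm t k]; omega
    · rw [hIt]
      by_contra hc
      push_neg at hc
      have h5 : l * k ≤ t * k := Nat.mul_le_mul_right k hc
      rw [← hmlk, mul_comm t k] at h5
      omega
  -- powers of uQ and residues
  have hcast : ∀ s : ℕ, ((uQ : ZMod m) ^ s) = ((q ^ s % m : ℕ) : ZMod m) := by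
    intro s
    rw [ZMod.coe_unitOfCoprime, ← Nat.cast_pow]
    exact (ZMod.natCast_mod _ _).symm
  have hpoweq : ∀ s s' : ℕ, uQ ^ s = uQ ^ s' ↔ q ^ s % m = q ^ s' % m := by
    intro s s'
    rw [Units.ext_iff, Units.val_pow_eq_pow_val, Units.val_pow_eq_pow_val, hcast s, hcast s',
      ZMod.natCast_eq_natCast_iff']
    rw [Nat.mod_mod_of_dvd _ (dvd_refl m), Nat.mod_mod_of_dvd _ (dvd_refl m)]
  have hIinj : ∀ s s' : Fin l, I (s:ℕ) = I (s':ℕ) → s = s' := by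
    intro s s' h
    have h1 : q ^ (s:ℕ) % m = q ^ (s':ℕ) % m := by
      rw [(hIval (s:ℕ)).1, (hIval (s':ℕ)).1, h]
    have h2 : uQ ^ (s:ℕ) = uQ ^ (s':ℕ) := (hpoweq _ _).mpr h1
    have h3 := pow_injOn_Iio_orderOf (x := uQ) (by rw [← hlu]; exact s.2)
      (by rw [← hlu]; exact s'.2) h2
    exact Fin.ext h3
  set χ : Fin l → Fin l := fun s => ⟨I (s:ℕ), (hIval (s:ℕ)).2⟩ with hχdef
  have hχinj : Function.Injective χ := by
    intro s s' h
    apply hIinj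
    have := congrArg (fun t : Fin l => (t : ℕ)) h
    simpa [hχdef] using this
  have hχsurj : Function.Surjective χ := Finite.surjective_of_injective hχinj
  choose σ hσ using fun i => hχsurj i
  have hIσ : ∀ i : Fin l, I ((σ i : Fin l) : ℕ) = (i : ℕ) := by
    intro i
    have := congrArg (fun t : Fin l => (t:ℕ)) (hσ i)
    simpa [hχdef] using this
  -- the factor data
  set sfn : Fin l × Fin k → ℕ := fun pp => ((σ pp.1 : Fin l) : ℕ) + (pp.2 : ℕ) * l with hsfndef
  set cfn : Fin l × Fin k → ℕ := fun pp => (pp.1 : ℕ) * k + 1 with hcfndef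
  set ufn : Fin l × Fin k → F := fun pp => a ^ (q ^ sfn pp / m) with hufndef
  have hslt : ∀ pp, sfn pp < m := by
    intro pp
    have h1 : ((σ pp.1 : Fin l):ℕ) < l := (σ pp.1).2
    have h2 : (pp.2 : ℕ) ≤ k - 1 := by have := pp.2.2; omega
    have h3 : (pp.2:ℕ) * l ≤ (k-1) * l := Nat.mul_le_mul_right l h2
    have h4 : (k-1) * l + l = k * l := by
      have h5 : (k - 1) + 1 = k := Nat.succ_pred_eq_of_pos hkpos
      calc (k-1)*l + l = ((k-1)+1)*l := by ring
      _ = k * l := by rw [h5]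
    have h6 : m = k * l := by rw [hmlk]; ring
    have h7 : sfn pp = ((σ pp.1 : Fin l):ℕ) + (pp.2:ℕ) * l := rfl
    omega
  have hresfn : ∀ pp, q ^ sfn pp % m = cfn pp := by
    intro pp
    have h1 : uQ ^ sfn pp = uQ ^ ((σ pp.1 : Fin l):ℕ) := by
      rw [pow_eq_pow_iff_modEq, ← hlu]
      show sfn pp % l = ((σ pp.1 : Fin l):ℕ) % l
      exact Nat.add_mul_mod_self_right _ _ _
    have h2 := (hpoweq _ _).mp h1
    rw [h2, (hIval _).1, hIσ pp.1]
  have hane : a ≠ 0 := by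
    intro h0
    have hXm : f = X ^ m := by rw [hfdef, h0, map_zero, sub_zero]
    rw [hXm] at hirr
    have h2 := hirr.2 (a := X) (b := X ^ (m-1)) (by rw [← pow_succ']; congr 1; omega)
    rcases h2 with h | h
    · exact Polynomial.not_isUnit_X h
    · have h3 : ¬ IsUnit (X ^ (m-1) : Polynomial F) := by
        intro hu
        have h4 := Polynomial.natDegree_eq_zero_of_isUnit hu
        rw [Polynomial.natDegree_pow, Polynomial.natDegree_X] at h4
        omega
      exact h3 h
  have hufne : ∀ pp, ufn pp ≠ 0 := fun pp => pow_ne_zero _ hane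
  set Fp : Fin l × Fin k → Polynomial F := fun pp => C (ufn pp) * X ^ cfn pp + C b with hFpdef
  have haev : ∀ pp, (Polynomial.aeval θ) (Fp pp) = x₀ ^ q ^ sfn pp := by
    intro pp
    have h1 : x₀ ^ q ^ sfn pp
        = (AdjoinRoot.of f) (a ^ (q ^ sfn pp / m)) * θ ^ (cfn pp) + (AdjoinRoot.of f) b := by
      rw [hconj (sfn pp), hresfn pp]
    rw [h1, hFpdef]
    simp only [map_add, map_mul, map_pow, Polynomial.aeval_C, Polynomial.aeval_X,
      AdjoinRoot.algebraMap_eq, hufndef]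
  have hudist : ∀ pp qq : Fin l × Fin k, pp.1 = qq.1 → ufn pp = ufn qq → pp = qq := by
    intro pp qq h1 h2
    by_contra hne
    have hj : pp.2 ≠ qq.2 := by
      intro h; exact hne (Prod.ext h1 h)
    have hjn : (pp.2 : ℕ) ≠ (qq.2 : ℕ) := fun h => hj (Fin.ext h)
    have hFeq : Fp pp = Fp qq := by
      rw [hFpdef]
      simp only []
      rw [h2, hcfndef]
      simp only []
      rw [h1]
    have hxeq : x₀ ^ q ^ sfn pp = x₀ ^ q ^ sfn qq := by rw [← haev pp, ← haev qq, hFeq]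
    have hmain : ∀ s s' : ℕ, s < s' → s' < m → x₀ ^ q ^ s = x₀ ^ q ^ s' → False := by
      intro s s' hss hsm hx
      have h3 : (x₀ ^ q ^ s') ^ q ^ (m - s') = x₀ := by
        rw [← pow_mul, ← pow_add]
        have hsum : s' + (m - s') = m := by omega
        rw [hsum]
        exact hZfix x₀
      have h4 : (x₀ ^ q ^ s) ^ q ^ (m - s') = x₀ ^ q ^ (s + (m - s')) := by
        rw [← pow_mul, ← pow_add]
      rw [hx, h3] at h4
      exact hdist (s + (m - s')) (by omega) (by omega) h4.symm
    have hsneq : sfn pp ≠ sfn qq := by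
      intro h
      rw [hsfndef] at h
      simp only [] at h
      rw [h1] at h
      have h5 : (pp.2:ℕ) * l = (qq.2:ℕ) * l := by omega
      exact hjn (Nat.eq_of_mul_eq_mul_right hlpos h5)
    rcases lt_or_gt_of_ne hsneq with hlt | hgt
    · exact hmain _ _ hlt (hslt qq) hxeq
    · exact hmain _ _ hgt (hslt pp) hxeq.symm
  -- hypotheses of the combinatorial lemma
  have hc1 : ∀ pp, cfn pp % k = 1 % k := by
    intro pp
    rw [hcfndef]
    simp only []
    rw [add_comm, Nat.add_mul_mod_self_right]
  have hcpos : ∀ pp, 0 < cfn pp := by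
    intro pp
    rw [hcfndef]
    exact Nat.succ_pos _
  have hinjc : ∀ pp qq, cfn pp = cfn qq → ufn pp = ufn qq → pp = qq := by
    intro pp qq h1 h2
    have h3 : (pp.1:ℕ) = (qq.1:ℕ) := by
      rw [hcfndef] at h1
      simp only [] at h1
      have h4 : (pp.1:ℕ) * k = (qq.1:ℕ) * k := by omega
      exact Nat.eq_of_mul_eq_mul_right hkpos h4
    exact hudist pp qq (Fin.ext h3) h2
  have hrowc : ∀ (pp : Fin l × Fin k) (S : Finset (Fin l × Fin k)),
      (∀ qq ∈ S, cfn qq = cfn pp) → S.card ≤ k := by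
    intro pp S hS
    have h1 : S.card ≤ (Finset.univ : Finset (Fin k)).card := by
      apply Finset.card_le_card_of_injOn (fun qq => qq.2) (fun _ _ => Finset.mem_univ _)
      intro x hx y hy hxy
      have hcx : cfn x = cfn y := by rw [hS x hx, hS y hy]
      rw [hcfndef] at hcx
      simp only [] at hcx
      have h4 : (x.1:ℕ) * k = (y.1:ℕ) * k := by omega
      have h5 : (x.1:ℕ) = (y.1:ℕ) := Nat.eq_of_mul_eq_mul_right hkpos h4
      exact Prod.ext (Fin.ext h5) hxy
    simpa using h1
  -- the injection
  set N : (Fin l × Fin k → Fin 2) → ℕ := fun e => ∑ pp : Fin l × Fin k, (e pp : ℕ) * q ^ sfn pp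
    with hNdef
  set Asub : (Fin l × Fin k → Fin 2) → Finset (Fin l × Fin k) :=
    fun e => Finset.univ.filter (fun pp => e pp = 1) with hAsubdef
  set G : (Fin l × Fin k → Fin 2) → Polynomial F := fun e => ∏ pp ∈ Asub e, Fp pp with hGdef
  have hfin2 : ∀ x : Fin 2, (x : ℕ) = 0 ∨ (x : ℕ) = 1 := by decide
  have hne1 : ∀ x : Fin 2, (x : ℕ) = 0 → x ≠ 1 := by decide
  have heq1 : ∀ x : Fin 2, (x : ℕ) = 1 → x = 1 := by decide
  have hxN : ∀ e, x₀ ^ N e = (Polynomial.aeval θ) (G e) := by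
    intro e
    rw [hNdef, hGdef]
    simp only []
    rw [← Finset.prod_pow_eq_pow_sum, map_prod, Finset.prod_filter]
    apply Finset.prod_congr rfl
    intro pp _
    rcases hfin2 (e pp) with h | h
    · rw [if_neg (hne1 _ h), h, zero_mul, pow_zero]
    · rw [if_pos (heq1 _ h), h, one_mul, haev pp]
  have hFpne : ∀ pp, Fp pp ≠ 0 := by
    intro pp h0
    have h1 : (Fp pp).coeff (cfn pp) = ufn pp := by
      rw [hFpdef]
      simp only []
      rw [Polynomial.coeff_add, Polynomial.coeff_C_mul, Polynomial.coeff_X_pow, if_pos rfl,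
        Polynomial.coeff_C, if_neg (hcpos pp).ne', mul_one, add_zero]
    rw [h0, Polynomial.coeff_zero] at h1
    exact hufne pp h1.symm
  have hGdeg : ∀ e, (G e).natDegree = ∑ pp ∈ Asub e, cfn pp := by
    intro e
    rw [hGdef]
    simp only []
    rw [Polynomial.natDegree_prod _ _ (fun pp _ => hFpne pp)]
    apply Finset.sum_congr rfl
    intro pp _
    rw [hFpdef]
    simp only []
    rw [Polynomial.natDegree_add_C, Polynomial.natDegree_C_mul (hufne pp),
      Polynomial.natDegree_X_pow]
  have hsum_eq : ∀ e : Fin l × Fin k → Fin 2,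
      ∑ pp ∈ Asub e, cfn pp = ∑ pp : Fin l × Fin k, cfn pp * (e pp : ℕ) := by
    intro e
    rw [hAsubdef]
    simp only []
    rw [Finset.sum_filter]
    apply Finset.sum_congr rfl
    intro pp _
    rcases hfin2 (e pp) with h | h
    · rw [if_neg (hne1 _ h), h, mul_zero]
    · rw [if_pos (heq1 _ h), h, mul_one]
  set Sset := Finset.univ.filter (fun e : Fin l × Fin k → Fin 2 =>
      ∑ pp : Fin l × Fin k, ((pp.1 : ℕ) * k + 1) * (e pp : ℕ) < m) with hSdef
  have hGdegS : ∀ e ∈ Sset, (G e).natDegree < m := by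
    intro e he
    rw [hGdeg e, hsum_eq e]
    rw [hSdef, Finset.mem_filter] at he
    have h1 := he.2
    calc ∑ pp : Fin l × Fin k, cfn pp * (e pp : ℕ)
        = ∑ pp : Fin l × Fin k, ((pp.1 : ℕ) * k + 1) * (e pp : ℕ) := by
          apply Finset.sum_congr rfl
          intro pp _
          rw [hcfndef]
      _ < m := h1
  have hinjS : Set.InjOn (fun e => x₀ ^ N e) Sset := by
    intro e he e' he' hEq
    simp only [] at hEq
    have h1 : (Polynomial.aeval θ) (G e) = (Polynomial.aeval θ) (G e') := by
      rw [← hxN, ← hxN, hEq]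
    have h2 : AdjoinRoot.mk f (G e) = AdjoinRoot.mk f (G e') := by
      rw [← AdjoinRoot.aeval_eq, ← AdjoinRoot.aeval_eq]
      exact h1
    rw [AdjoinRoot.mk_eq_mk] at h2
    have hdegE : ∀ e'' ∈ Sset, (G e'').degree < (m : WithBot ℕ) := by
      intro e'' he''
      calc (G e'').degree ≤ ((G e'').natDegree : WithBot ℕ) := Polynomial.degree_le_natDegree
        _ < (m : WithBot ℕ) := by
          exact_mod_cast Nat.cast_lt.mpr (hGdegS e'' he'')
    have h3 : G e = G e' := by
      have h4 : (G e - G e').degree < f.degree := by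
        rw [hfdeg']
        calc (G e - G e').degree ≤ max (G e).degree (G e').degree :=
              Polynomial.degree_sub_le _ _
          _ < (m : WithBot ℕ) := max_lt (hdegE e he) (hdegE e' he')
      have h5 := Polynomial.eq_zero_of_dvd_of_degree_lt h2 h4
      have h6 := sub_eq_zero.mp h5
      exact h6
    have h7 : ∏ pp ∈ Asub e, (C (ufn pp) * X ^ cfn pp + C b)
        = ∏ pp ∈ Asub e', (C (ufn pp) * X ^ cfn pp + C b) := by
      have := h3
      rw [hGdef] at this
      simp only [] at this
      rw [hFpdef] at this
      exact this
    have h8 := OrderTheorem7.binom_prod_inj k cfn ufn b hb hufne hc1 hcpos hinjc hrowc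
      ((Asub e).card + (Asub e').card) (Asub e) (Asub e') rfl h7
    funext pp
    have h9 := Finset.ext_iff.mp h8 pp
    rw [hAsubdef] at h9
    simp only [Finset.mem_filter, Finset.mem_univ, true_and] at h9
    rcases hfin2 (e pp) with h | h <;> rcases hfin2 (e' pp) with h' | h'
    · have hv : (e pp : ℕ) = (e' pp : ℕ) := by omega
      exact Fin.ext hv
    · exact absurd (h9.mpr (heq1 _ h')) (hne1 _ h)
    · exact absurd (h9.mp (heq1 _ h)) (hne1 _ h')
    · have hv : (e pp : ℕ) = (e' pp : ℕ) := by omega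
      exact Fin.ext hv
  set T := (Finset.range (orderOf x₀)).image (fun n => x₀ ^ n) with hTdef
  have hmaps : ∀ e ∈ Sset, x₀ ^ N e ∈ T := by
    intro e _
    rw [hTdef]
    apply Finset.mem_image.mpr
    exact ⟨N e % orderOf x₀, Finset.mem_range.mpr (Nat.mod_lt _ hordpos),
      pow_mod_orderOf x₀ (N e)⟩
  calc Sset.card ≤ T.card := Finset.card_le_card_of_injOn _ hmaps hinjS
    _ ≤ (Finset.range (orderOf x₀)).card := Finset.card_image_le
    _ = orderOf x₀ := Finset.card_range _
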